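/- Let S be a maximal independent set, D ⊆ S, and A ⊆ F(D) a maximal independent set of G[D ∪ F(D)]. Then every vertex of D has a neighbor in A; in particular, if A = {a, b} and D = {x, y, z} with a, b each 1-tight, then the three vertices x, y, z cannot all be dominated by {a, b}, yielding a contradiction. -/

import Mathlib

open Finset

variable {V : Type*}

/-- `S` is an independent set in `G`: no two vertices of `S` are adjacent. -/
def Indep (G : SimpleGraph V) (S : Finset V) : Prop :=
  ∀ u ∈ S, ∀ v ∈ S, ¬ G.Adj u v

/-- `S` is a dominating set in `G`: every vertex outside `S` has a neighbor in `S`. -/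
def Dominating (G : SimpleGraph V) (S : Finset V) : Prop :=
  ∀ v, v ∉ S → ∃ u ∈ S, G.Adj u v

/-- `S` is a maximal independent set (w.r.t. set inclusion) in `G`. -/
def MaxIndep (G : SimpleGraph V) (S : Finset V) : Prop :=
  Indep G S ∧ ∀ T, Indep G T → S ⊆ T → T = S

/-- The tightness of a vertex `v` w.r.t. a solution `S`: the number of neighbors of `v` in `S`. -/
def tight [Fintype V] [DecidableEq V] (G : SimpleGraph V) [DecidableRel G.Adj]
    (S : Finset V) (v : V) : ℕ :=
  (G.neighborFinset v ∩ S).card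

/-- `F(D)`: the non-solution vertices all of whose solution neighbors lie in `D`. -/
def FD [Fintype V] [DecidableEq V] (G : SimpleGraph V) [DecidableRel G.Adj]
    (S D : Finset V) : Finset V :=
  Finset.univ.filter (fun v => v ∉ S ∧ G.neighborFinset v ∩ S ⊆ D)

/-- `A` is a maximal independent set of the subgraph of `G` induced on `W`. -/
def MaxIndepIn (G : SimpleGraph V) (W A : Finset V) : Prop :=
  A ⊆ W ∧ Indep G A ∧ ∀ T ⊆ W, Indep G T → A ⊆ T → T = A

/-- `S` is `k`-minimal: no `k`-swap yields a strictly smaller solution. -/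
def KMinimal [Fintype V] [DecidableEq V] (G : SimpleGraph V) (S : Finset V) (k : ℕ) : Prop :=
  ¬ ∃ D A : Finset V, D ⊆ S ∧ D.card = k ∧ A ⊆ Finset.univ \ S ∧ A.Nonempty ∧
      MaxIndep G ((S \ D) ∪ A) ∧ ((S \ D) ∪ A).card < S.card

theorem stmt_17 [Fintype V] [DecidableEq V] (G : SimpleGraph V) [DecidableRel G.Adj]
    (S D A : Finset V) (hS : MaxIndep G S) (hD : D ⊆ S)
    (hA : A ⊆ FD G S D) (hAmax : MaxIndepIn G (D ∪ FD G S D) A) :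
    (∀ d ∈ D, ∃ a ∈ A, G.Adj d a) ∧
    (∀ a b x y z : V, A = {a, b} → D = {x, y, z} → a ≠ b →
      x ≠ y → x ≠ z → y ≠ z →
      tight G S a = 1 → tight G S b = 1 → False) := by
  have hmain : ∀ d ∈ D, ∃ a ∈ A, G.Adj d a := by
    intro d hd
    by_contra h
    push_neg at h
    have hdS : d ∈ S := hD hd
    have hAindep := hAmax.2.1
    have hsub : insert d A ⊆ D ∪ FD G S D := by
      intro v hv
      rcases Finset.mem_insert.mp hv with rfl | hv
      · exact Finset.mem_union_left _ hd
      · exact Finset.mem_union_right _ (hA hv)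
    have hindep : Indep G (insert d A) := by
      intro u hu v hv
      rcases Finset.mem_insert.mp hu with hu1 | hu1
      · rcases Finset.mem_insert.mp hv with hv1 | hv1
        · rw [hu1, hv1]; exact G.irrefl
        · rw [hu1]; exact h v hv1
      · rcases Finset.mem_insert.mp hv with hv1 | hv1
        · rw [hv1]; intro hadj; exact h u hu1 hadj.symm
        · exact hAindep u hu1 v hv1
    have heq := hAmax.2.2 _ hsub hindep (Finset.subset_insert _ _)
    have hdA : d ∈ A := heq ▸ Finset.mem_insert_self d A
    have hFD := hA hdA
    simp only [FD, Finset.mem_filter] at hFD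
    exact hFD.2.1 hdS
  refine ⟨hmain, ?_⟩
  intro a b x y z hAeq hDeq hab hxy hxz hyz hta htb
  have hsubset : D ⊆ (G.neighborFinset a ∩ S) ∪ (G.neighborFinset b ∩ S) := by
    intro d hd
    obtain ⟨c, hc, hadj⟩ := hmain d hd
    have hdS := hD hd
    rw [hAeq] at hc
    rcases Finset.mem_insert.mp hc with rfl | hc
    · exact Finset.mem_union_left _
        (Finset.mem_inter.mpr ⟨(G.mem_neighborFinset _ _).mpr hadj.symm, hdS⟩)
    · rw [Finset.mem_singleton] at hc
      subst hc
      exact Finset.mem_union_right _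
        (Finset.mem_inter.mpr ⟨(G.mem_neighborFinset _ _).mpr hadj.symm, hdS⟩)
  unfold tight at hta htb
  have hcard : D.card ≤ 2 := by
    calc D.card ≤ ((G.neighborFinset a ∩ S) ∪ (G.neighborFinset b ∩ S)).card :=
          Finset.card_le_card hsubset
      _ ≤ (G.neighborFinset a ∩ S).card + (G.neighborFinset b ∩ S).card :=
          Finset.card_union_le _ _
      _ = 2 := by rw [hta, htb]
  have hD3 : D.card = 3 := by
    rw [hDeq, Finset.card_insert_of_notMem (by simp [hxy, hxz]),
      Finset.card_insert_of_notMem (by simp [hyz]), Finset.card_singleton]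
  omega
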